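/- If a chord diagram D' is obtained from D by a second Reidemeister move (adding two parallel chords c1={p,q}, c2={p+1,q+1} with every old chord linked with c1 iff linked with c2 and c1 not linked with c2), then the second Reidemeister move is a special case of an elementary cobordism: there is an even symmetric configuration on D' consisting of two arcs, whose deletion gives D. -/

import Mathlib

/-- Two chords `c = {c.1, c.2}` and `d = {d.1, d.2}` (each written with smaller
endpoint first) of a chord diagram are *linked* (interleaved) iff the endpoints
of one separate the endpoints of the other on the circle. -/
def Linked (c d : ℕ × ℕ) : Prop :=
  (c.1 < d.1 ∧ d.1 < c.2 ∧ c.2 < d.2) ∨ (d.1 < c.1 ∧ c.1 < d.2 ∧ d.2 < c.2)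

instance : DecidableRel Linked := fun c d => by unfold Linked; infer_instance

/-- A chord diagram on the `N` points `0, …, N-1` of a circle: a finite set of
chords, each recorded as an ordered pair (smaller endpoint, larger endpoint),
forming a perfect matching of `{0, …, N-1}`. -/
structure IsChordDiagram (N : ℕ) (D : Finset (ℕ × ℕ)) : Prop where
  lt : ∀ c ∈ D, c.1 < c.2 ∧ c.2 < N
  matching : ∀ x < N, ∃! c, c ∈ D ∧ (c.1 = x ∨ c.2 = x)

/-- `x` lies in (the set of points of) the configuration `C`, a finite set of
arcs of the circle, each arc recorded as the interval of points `[A.1, A.2]`. -/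
def InConfig (C : Finset (ℕ × ℕ)) (x : ℕ) : Prop :=
  ∃ A ∈ C, A.1 ≤ x ∧ x ≤ A.2

instance (C : Finset (ℕ × ℕ)) : DecidablePred (InConfig C) := fun x => by
  unfold InConfig; infer_instance

/-- The reflection involution of the configuration `C`: reflects each arc of
`C` along its radius and fixes all points outside the arcs. -/
noncomputable def reflectPt (C : Finset (ℕ × ℕ)) (x : ℕ) : ℕ :=
  ((C.toList.find? fun A => A.1 ≤ x && x ≤ A.2).map fun A => A.1 + A.2 - x).getD x

/-- Rewrite a pair of points as a chord (smaller endpoint first). -/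
def sortPair (p : ℕ × ℕ) : ℕ × ℕ := (min p.1 p.2, max p.1 p.2)

/-- The image of a chord under the reflection involution of the configuration. -/
noncomputable def reflectChord (C : Finset (ℕ × ℕ)) (c : ℕ × ℕ) : ℕ × ℕ :=
  sortPair (reflectPt C c.1, reflectPt C c.2)

/-- An even symmetric configuration `C` on the chord diagram `D` (on `N`
points): a finite family of pairwise disjoint arcs of the circle such that
each arc contains an even number of chord endpoints, every chord with one
endpoint in the arcs has both endpoints in the arcs, and the reflection
involution `i` of the arcs maps the chord diagram to itself, `i(D) = D`. -/
structure EvenSymConfig (N : ℕ) (D : Finset (ℕ × ℕ)) (C : Finset (ℕ × ℕ)) : Prop where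
  arcs : ∀ A ∈ C, A.1 ≤ A.2 ∧ A.2 < N
  disj : ∀ A ∈ C, ∀ B ∈ C, A ≠ B → A.2 < B.1 ∨ B.2 < A.1
  even : ∀ A ∈ C,
    Even (((D.biUnion fun c => ({c.1, c.2} : Finset ℕ)).filter
      fun x => A.1 ≤ x ∧ x ≤ A.2).card)
  closed : ∀ c ∈ D, (InConfig C c.1 ↔ InConfig C c.2)
  symm : ∀ c ∈ D, reflectChord C c ∈ D

/-- A second Reidemeister move, adding two parallel (unlinked) chords
`c1 = {p, q+1}` and `c2 = {p+1, q}` — so that every old chord is linked with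
`c1` iff it is linked with `c2` — is a special case of an elementary
cobordism: there is an even symmetric configuration on the bigger diagram `D'`
consisting of the two arcs `[p, p+1]` and `[q, q+1]`, whose deletion gives the
smaller diagram `D`. -/
theorem stmt_7 (N p q : ℕ) (D D' : Finset (ℕ × ℕ)) (hpq : p + 1 < q)
    (hD' : IsChordDiagram N D')
    (hc1 : (p, q + 1) ∈ D') (hc2 : (p + 1, q) ∈ D')
    (hD : D = (D'.erase (p, q + 1)).erase (p + 1, q)) :
    ∃ C : Finset (ℕ × ℕ), C = ({(p, p + 1), (q, q + 1)} : Finset (ℕ × ℕ)) ∧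
      EvenSymConfig N D' C ∧ (D'.filter fun c => ¬ InConfig C c.1) = D := by
  classical
  set C : Finset (ℕ × ℕ) := {(p, p + 1), (q, q + 1)} with hC
  obtain ⟨hlt1, hN1⟩ := hD'.lt _ hc1
  obtain ⟨hlt2, hN2⟩ := hD'.lt _ hc2
  simp only at hlt1 hN1 hlt2 hN2
  have uniq : ∀ x < N, ∀ c ∈ D', ∀ d ∈ D',
      (c.1 = x ∨ c.2 = x) → (d.1 = x ∨ d.2 = x) → c = d := by
    intro x hx c hc d hd hcx hdx
    obtain ⟨e, _, hu⟩ := hD'.matching x hx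
    rw [hu c ⟨hc, hcx⟩, hu d ⟨hd, hdx⟩]
  have key : ∀ c ∈ D', (c.1 = p ∨ c.2 = p ∨ c.1 = p+1 ∨ c.2 = p+1 ∨
      c.1 = q ∨ c.2 = q ∨ c.1 = q+1 ∨ c.2 = q+1) → c = (p, q+1) ∨ c = (p+1, q) := by
    intro c hc h
    rcases h with h|h|h|h|h|h|h|h
    · exact Or.inl (uniq p (by omega) c hc _ hc1 (Or.inl h) (Or.inl rfl))
    · exact Or.inl (uniq p (by omega) c hc _ hc1 (Or.inr h) (Or.inl rfl))
    · exact Or.inr (uniq (p+1) (by omega) c hc _ hc2 (Or.inl h) (Or.inl rfl))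
    · exact Or.inr (uniq (p+1) (by omega) c hc _ hc2 (Or.inr h) (Or.inl rfl))
    · exact Or.inr (uniq q (by omega) c hc _ hc2 (Or.inl h) (Or.inr rfl))
    · exact Or.inr (uniq q (by omega) c hc _ hc2 (Or.inr h) (Or.inr rfl))
    · exact Or.inl (uniq (q+1) (by omega) c hc _ hc1 (Or.inl h) (Or.inr rfl))
    · exact Or.inl (uniq (q+1) (by omega) c hc _ hc1 (Or.inr h) (Or.inr rfl))
  have hIn : ∀ x, InConfig C x ↔ (x = p ∨ x = p + 1 ∨ x = q ∨ x = q + 1) := by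
    intro x
    constructor
    · rintro ⟨A, hA, h1, h2⟩
      simp only [hC, Finset.mem_insert, Finset.mem_singleton] at hA
      rcases hA with rfl | rfl <;> simp only at h1 h2 <;> omega
    · rintro (h | h | h | h)
      · exact ⟨(p, p+1), by simp [hC], by omega, by omega⟩
      · exact ⟨(p, p+1), by simp [hC], by omega, by omega⟩
      · exact ⟨(q, q+1), by simp [hC], by omega, by omega⟩
      · exact ⟨(q, q+1), by simp [hC], by omega, by omega⟩
  have hrefl : ∀ x, reflectPt C x =
      if x = p then p+1 else if x = p+1 then p
      else if x = q then q+1 else if x = q+1 then q else x := by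
    intro x
    unfold reflectPt
    cases hfind : C.toList.find? (fun A => A.1 ≤ x && x ≤ A.2) with
    | none =>
      have hall := List.find?_eq_none.mp hfind
      have h1 : ¬ (p ≤ x ∧ x ≤ p+1) := by
        intro h
        have := hall (p, p+1) (Finset.mem_toList.mpr (by simp [hC]))
        simp at this; omega
      have h2 : ¬ (q ≤ x ∧ x ≤ q+1) := by
        intro h
        have := hall (q, q+1) (Finset.mem_toList.mpr (by simp [hC]))
        simp at this; omega
      simp only [Option.map_none, Option.getD_none]
      split_ifs <;> omega
    | some A =>
      have hmem : A ∈ C := Finset.mem_toList.mp (List.mem_of_find?_eq_some hfind)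
      have hpred := List.find?_some hfind
      simp only [Bool.and_eq_true, decide_eq_true_eq] at hpred
      simp only [hC, Finset.mem_insert, Finset.mem_singleton] at hmem
      simp only [Option.map_some, Option.getD_some]
      rcases hmem with rfl | rfl <;> simp only at hpred ⊢ <;> split_ifs <;> omega
  have e1 : reflectPt C p = p + 1 := by rw [hrefl]; split_ifs <;> omega
  have e2 : reflectPt C (p+1) = p := by rw [hrefl]; split_ifs <;> omega
  have e3 : reflectPt C q = q + 1 := by rw [hrefl]; split_ifs <;> omega
  have e4 : reflectPt C (q+1) = q := by rw [hrefl]; split_ifs <;> omega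
  refine ⟨C, hC, ⟨?_, ?_, ?_, ?_, ?_⟩, ?_⟩
  · -- arcs
    intro A hA
    simp only [hC, Finset.mem_insert, Finset.mem_singleton] at hA
    rcases hA with rfl | rfl <;> exact ⟨by omega, by omega⟩
  · -- disj
    intro A hA B hB hAB
    simp only [hC, Finset.mem_insert, Finset.mem_singleton] at hA hB
    rcases hA with rfl | rfl <;> rcases hB with rfl | rfl <;>
      first
        | exact absurd rfl hAB
        | exact Or.inl (by omega)
        | exact Or.inr (by omega)
  · -- even
    intro A hA
    simp only [hC, Finset.mem_insert, Finset.mem_singleton] at hA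
    rcases hA with rfl | rfl
    · have hset : ((D'.biUnion fun c => ({c.1, c.2} : Finset ℕ)).filter
          fun x => (p, p+1).1 ≤ x ∧ x ≤ (p, p+1).2) = {p, p+1} := by
        ext x
        simp only [Finset.mem_filter, Finset.mem_biUnion, Finset.mem_insert,
          Finset.mem_singleton]
        constructor
        · rintro ⟨_, h1, h2⟩; omega
        · rintro (h | h)
          · exact ⟨⟨(p, q+1), hc1, Or.inl h⟩, by omega, by omega⟩
          · exact ⟨⟨(p+1, q), hc2, Or.inl h⟩, by omega, by omega⟩
      rw [hset, Finset.card_insert_of_notMem (by simp), Finset.card_singleton]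
      exact ⟨1, rfl⟩
    · have hset : ((D'.biUnion fun c => ({c.1, c.2} : Finset ℕ)).filter
          fun x => (q, q+1).1 ≤ x ∧ x ≤ (q, q+1).2) = {q, q+1} := by
        ext x
        simp only [Finset.mem_filter, Finset.mem_biUnion, Finset.mem_insert,
          Finset.mem_singleton]
        constructor
        · rintro ⟨_, h1, h2⟩; omega
        · rintro (h | h)
          · exact ⟨⟨(p+1, q), hc2, Or.inr h⟩, by omega, by omega⟩
          · exact ⟨⟨(p, q+1), hc1, Or.inr h⟩, by omega, by omega⟩
      rw [hset, Finset.card_insert_of_notMem (by simp), Finset.card_singleton]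
      exact ⟨1, rfl⟩
  · -- closed
    intro c hc
    rw [hIn, hIn]
    constructor <;> intro h <;>
      rcases key c hc (by tauto) with rfl | rfl <;> simp <;> omega
  · -- symm
    intro c hc
    by_cases h1 : c = (p, q+1)
    · subst h1
      have : reflectChord C (p, q+1) = (p+1, q) := by
        simp only [reflectChord, sortPair, e1, e4, Prod.mk.injEq]
        exact ⟨by omega, by omega⟩
      rw [this]; exact hc2
    by_cases h2 : c = (p+1, q)
    · subst h2
      have : reflectChord C (p+1, q) = (p, q+1) := by
        simp only [reflectChord, sortPair, e2, e3, Prod.mk.injEq]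
        exact ⟨by omega, by omega⟩
      rw [this]; exact hc1
    · have h8 : ¬(c.1 = p ∨ c.2 = p ∨ c.1 = p+1 ∨ c.2 = p+1 ∨
          c.1 = q ∨ c.2 = q ∨ c.1 = q+1 ∨ c.2 = q+1) := by
        intro h
        rcases key c hc h with rfl | rfl
        · exact h1 rfl
        · exact h2 rfl
      push_neg at h8
      obtain ⟨n1, n2, n3, n4, n5, n6, n7, n8⟩ := h8
      have f1 : reflectPt C c.1 = c.1 := by rw [hrefl]; split_ifs <;> omega
      have f2 : reflectPt C c.2 = c.2 := by rw [hrefl]; split_ifs <;> omega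
      have hab := (hD'.lt c hc).1
      have : reflectChord C c = c := by
        simp only [reflectChord, sortPair, f1, f2]
        rw [min_eq_left hab.le, max_eq_right hab.le]
      rw [this]; exact hc
  · -- filter
    subst hD
    ext c
    simp only [Finset.mem_filter, Finset.mem_erase]
    constructor
    · rintro ⟨hcD, hnc⟩
      refine ⟨?_, ?_, hcD⟩
      · rintro rfl; exact hnc ((hIn _).mpr (Or.inr (Or.inl rfl)))
      · rintro rfl; exact hnc ((hIn _).mpr (Or.inl rfl))
    · rintro ⟨hne2, hne1, hcD⟩
      refine ⟨hcD, fun hin => ?_⟩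
      have := (hIn _).mp hin
      rcases key c hcD (by tauto) with rfl | rfl
      · exact hne1 rfl
      · exact hne2 rfl
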